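/- Under the standing assumption, if p : [0,∞) → ℝ^𝓖_{≥0} is a differentiable solution of the recombination dynamics whose initial condition p(0) ∈ S_𝓖 has all marginals positive (p(0)ᵢ(a) > 0 for every locus i and allele a ∈ 𝓐ᵢ), then p(t) ∈ ℝ^𝓖_{>0} for all t > 0; i.e., as long as all alleles are present in the population, recombination immediately produces all gametes with positive frequency. -/

import Mathlib

open Finset

/-- Recombination of gametes `g` and `h` following pattern `{I, Iᶜ}`:
`(g_I h_J)ᵢ = gᵢ` for `i ∈ I` and `= hᵢ` for `i ∈ J = Iᶜ`. -/
def recomb {L : Type} [DecidableEq L] {A : L → Type} (I : Finset L)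
    (g h : ∀ i, A i) : ∀ i, A i :=
  fun i => if i ∈ I then g i else h i

/-- The recombination vector field
`F(p) = (1/2) Σ_{g,h} Σ_{{I,J} ∈ 𝓟} c({I,J}) p(g) p(h) (g_I h_J + g_J h_I − g − h)`,
where the sum over unordered patterns `{I,J}` is written as `(1/2) Σ_{I : Finset L}`
(every unordered pattern `{I, Iᶜ}` corresponds to exactly two subsets `I` and `Iᶜ`;
the rate constants satisfy `c I = c Iᶜ`). -/
noncomputable def recF {L : Type} [Fintype L] [DecidableEq L] {A : L → Type}
    [∀ i, Fintype (A i)] [∀ i, DecidableEq (A i)]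
    (c : Finset L → ℝ) (p : (∀ i, A i) → ℝ) : (∀ i, A i) → ℝ :=
  fun x => (1 / 4) * ∑ g : ∀ i, A i, ∑ h : ∀ i, A i, ∑ I : Finset L,
    c I * p g * p h *
      ((if x = recomb I g h then 1 else 0) + (if x = recomb Iᶜ g h then 1 else 0)
        - (if x = g then 1 else 0) - (if x = h then 1 else 0))

/-- The marginal frequency `pᵢ(a) = Σ_{g : gᵢ = a} p(g)`. -/
noncomputable def marg {L : Type} [Fintype L] [DecidableEq L] {A : L → Type}
    [∀ i, Fintype (A i)] [∀ i, DecidableEq (A i)]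
    (p : (∀ i, A i) → ℝ) (i : L) (a : A i) : ℝ :=
  ∑ g : ∀ j, A j, if g i = a then p g else 0

section aux

variable {L : Type} [Fintype L] [DecidableEq L] {A : L → Type}
  [∀ i, Fintype (A i)] [∀ i, DecidableEq (A i)]

/-- Indicator that `g` agrees with `x` on `I`. -/
noncomputable def chi (I : Finset L) (x g : ∀ i, A i) : ℝ :=
  if ∀ i ∈ I, g i = x i then 1 else 0

/-- Generalized marginal. -/
noncomputable def margI (q : (∀ i, A i) → ℝ) (I : Finset L) (x : ∀ i, A i) : ℝ :=
  ∑ g : ∀ i, A i, chi I x g * q g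

lemma chi_nonneg {I : Finset L} {x g : ∀ i, A i} : 0 ≤ chi I x g := by
  unfold chi; split <;> norm_num

lemma margI_nonneg {q : (∀ i, A i) → ℝ} (hq : ∀ g, 0 ≤ q g) (I : Finset L) (x : ∀ i, A i) :
    0 ≤ margI q I x :=
  Finset.sum_nonneg fun g _ => mul_nonneg chi_nonneg (hq g)

lemma chi_empty {x g : ∀ i, A i} : chi (∅ : Finset L) x g = 1 := by simp [chi]

lemma margI_empty {q : (∀ i, A i) → ℝ} {x : ∀ i, A i} :
    margI q (∅ : Finset L) x = ∑ g : ∀ i, A i, q g := by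
  simp [margI, chi_empty]

lemma margI_univ {q : (∀ i, A i) → ℝ} {x : ∀ i, A i} :
    margI q (univ : Finset L) x = q x := by
  have : ∀ g : ∀ i, A i, chi (univ : Finset L) x g = if g = x then 1 else 0 := by
    intro g; simp [chi, funext_iff]
  simp [margI, this, ite_mul]

lemma margI_singleton {q : (∀ i, A i) → ℝ} {x : ∀ i, A i} (i : L) :
    margI q ({i} : Finset L) x = marg q i (x i) := by
  unfold margI marg
  refine Finset.sum_congr rfl fun g _ => ?_
  by_cases h : g i = x i <;> simp [chi, h]

lemma chi_recomb (I J : Finset L) (x g h : ∀ i, A i) :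
    chi I x (recomb J g h) = chi (I ∩ J) x g * chi (I \ J) x h := by
  have key : (∀ i ∈ I, recomb J g h i = x i) ↔
      ((∀ i ∈ I ∩ J, g i = x i) ∧ (∀ i ∈ I \ J, h i = x i)) := by
    constructor
    · intro H
      refine ⟨fun i hi => ?_, fun i hi => ?_⟩
      · obtain ⟨hiI, hiJ⟩ := Finset.mem_inter.mp hi
        have := H i hiI; rwa [recomb, if_pos hiJ] at this
      · obtain ⟨hiI, hiJ⟩ := Finset.mem_sdiff.mp hi
        have := H i hiI; rwa [recomb, if_neg hiJ] at this
    · rintro ⟨H1, H2⟩ i hi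
      by_cases hj : i ∈ J
      · rw [recomb, if_pos hj]; exact H1 i (Finset.mem_inter.mpr ⟨hi, hj⟩)
      · rw [recomb, if_neg hj]; exact H2 i (Finset.mem_sdiff.mpr ⟨hi, hj⟩)
  unfold chi
  rw [if_congr key rfl rfl]
  by_cases h1 : ∀ i ∈ I ∩ J, g i = x i <;> by_cases h2 : ∀ i ∈ I \ J, h i = x i
  · rw [if_pos ⟨h1, h2⟩, if_pos h1, if_pos h2]; norm_num
  · rw [if_neg (fun hh => h2 hh.2), if_pos h1, if_neg h2]; norm_num
  · rw [if_neg (fun hh => h1 hh.1), if_neg h1]; norm_num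
  · rw [if_neg (fun hh => h1 hh.1), if_neg h1]; norm_num

lemma chi_recomb_compl (I J : Finset L) (x g h : ∀ i, A i) :
    chi I x (recomb Jᶜ g h) = chi (I \ J) x g * chi (I ∩ J) x h := by
  rw [chi_recomb]
  congr 1
  · rw [sdiff_eq, Finset.inf_eq_inter]
  · rw [sdiff_eq, compl_compl, Finset.inf_eq_inter]

/-- The key algebraic identity: the `I`-marginal of the recombination field. -/
lemma sum_chi_recF (c : Finset L → ℝ) (q : (∀ i, A i) → ℝ) (I : Finset L) (x : ∀ i, A i) :
    ∑ g : ∀ i, A i, chi I x g * recF c q g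
      = (1 / 2) * ∑ J : Finset L,
          c J * (margI q (I ∩ J) x * margI q (I \ J) x
            - margI q I x * ∑ h : ∀ i, A i, q h) := by
  classical
  have hdelta : ∀ y : ∀ i, A i,
      (∑ g : ∀ i, A i, chi I x g * (if g = y then (1:ℝ) else 0)) = chi I x y := by
    intro y
    rw [Finset.sum_eq_single y (fun b _ hb => by simp [hb]) (by simp)]
    simp
  have prod_eval : ∀ α β : (∀ i, A i) → ℝ,
      (∑ g' : ∀ i, A i, ∑ h : ∀ i, A i, q g' * q h * (α g' * β h))
        = (∑ g' : ∀ i, A i, α g' * q g') * (∑ h : ∀ i, A i, β h * q h) := by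
    intro α β
    rw [Finset.sum_mul_sum]
    exact Finset.sum_congr rfl fun g' _ => Finset.sum_congr rfl fun h _ => by ring
  calc
    ∑ g : ∀ i, A i, chi I x g * recF c q g
        = ∑ g : ∀ i, A i, ∑ g' : ∀ i, A i, ∑ h : ∀ i, A i, ∑ J : Finset L,
            (1/4) * (c J * q g' * q h) *
              (chi I x g * ((if g = recomb J g' h then (1:ℝ) else 0)
                + (if g = recomb Jᶜ g' h then 1 else 0)
                - (if g = g' then 1 else 0) - (if g = h then 1 else 0))) := by
      refine Finset.sum_congr rfl fun g _ => ?_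
      unfold recF
      rw [show chi I x g * ((1/4 : ℝ) * ∑ g' : ∀ i, A i, ∑ h : ∀ i, A i, ∑ J : Finset L,
          c J * q g' * q h *
            ((if g = recomb J g' h then (1:ℝ) else 0) + (if g = recomb Jᶜ g' h then 1 else 0)
              - (if g = g' then 1 else 0) - (if g = h then 1 else 0)))
        = (chi I x g * (1/4)) * ∑ g' : ∀ i, A i, ∑ h : ∀ i, A i, ∑ J : Finset L,
            c J * q g' * q h *
            ((if g = recomb J g' h then (1:ℝ) else 0) + (if g = recomb Jᶜ g' h then 1 else 0)
              - (if g = g' then 1 else 0) - (if g = h then 1 else 0)) from by ring]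
      simp only [Finset.mul_sum]
      refine Finset.sum_congr rfl fun g' _ => Finset.sum_congr rfl fun h _ =>
        Finset.sum_congr rfl fun J _ => by ring
    _ = ∑ g' : ∀ i, A i, ∑ h : ∀ i, A i, ∑ J : Finset L, ∑ g : ∀ i, A i,
            (1/4) * (c J * q g' * q h) *
              (chi I x g * ((if g = recomb J g' h then (1:ℝ) else 0)
                + (if g = recomb Jᶜ g' h then 1 else 0)
                - (if g = g' then 1 else 0) - (if g = h then 1 else 0))) := by
      rw [Finset.sum_comm]
      refine Finset.sum_congr rfl fun g' _ => ?_
      rw [Finset.sum_comm]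
      refine Finset.sum_congr rfl fun h _ => ?_
      rw [Finset.sum_comm]
    _ = ∑ g' : ∀ i, A i, ∑ h : ∀ i, A i, ∑ J : Finset L,
            (1/4) * (c J * q g' * q h) *
              (chi I x (recomb J g' h) + chi I x (recomb Jᶜ g' h)
                - chi I x g' - chi I x h) := by
      refine Finset.sum_congr rfl fun g' _ => Finset.sum_congr rfl fun h _ =>
        Finset.sum_congr rfl fun J _ => ?_
      rw [← Finset.mul_sum]
      congr 1
      simp only [mul_add, mul_sub, Finset.sum_add_distrib, Finset.sum_sub_distrib, hdelta]
    _ = ∑ J : Finset L, ∑ g' : ∀ i, A i, ∑ h : ∀ i, A i,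
            (1/4) * (c J * q g' * q h) *
              (chi I x (recomb J g' h) + chi I x (recomb Jᶜ g' h)
                - chi I x g' - chi I x h) := by
      rw [show (∑ g' : ∀ i, A i, ∑ h : ∀ i, A i, ∑ J : Finset L,
            (1/4) * (c J * q g' * q h) *
              (chi I x (recomb J g' h) + chi I x (recomb Jᶜ g' h)
                - chi I x g' - chi I x h))
          = ∑ g' : ∀ i, A i, ∑ J : Finset L, ∑ h : ∀ i, A i,
            (1/4) * (c J * q g' * q h) *
              (chi I x (recomb J g' h) + chi I x (recomb Jᶜ g' h)
                - chi I x g' - chi I x h)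
          from Finset.sum_congr rfl fun g' _ => Finset.sum_comm]
      exact Finset.sum_comm
    _ = ∑ J : Finset L, ∑ g' : ∀ i, A i, ∑ h : ∀ i, A i,
            (1/4) * (c J * q g' * q h) *
              (chi (I ∩ J) x g' * chi (I \ J) x h + chi (I \ J) x g' * chi (I ∩ J) x h
                - chi I x g' - chi I x h) := by
      refine Finset.sum_congr rfl fun J _ => Finset.sum_congr rfl fun g' _ =>
        Finset.sum_congr rfl fun h _ => ?_
      rw [chi_recomb, chi_recomb_compl]
    _ = ∑ J : Finset L, (1/4) * c J *
          (margI q (I ∩ J) x * margI q (I \ J) x + margI q (I \ J) x * margI q (I ∩ J) x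
            - margI q I x * (∑ h : ∀ i, A i, q h)
            - (∑ g' : ∀ i, A i, q g') * margI q I x) := by
      refine Finset.sum_congr rfl fun J _ => ?_
      have peval1 : ∀ α : (∀ i, A i) → ℝ,
          (∑ g' : ∀ i, A i, ∑ h : ∀ i, A i, q g' * q h * α g')
            = (∑ g' : ∀ i, A i, α g' * q g') * (∑ h : ∀ i, A i, q h) := by
        intro α
        rw [Finset.sum_mul_sum]
        exact Finset.sum_congr rfl fun g' _ => Finset.sum_congr rfl fun h _ => by ring
      have peval2 : ∀ β : (∀ i, A i) → ℝ,
          (∑ g' : ∀ i, A i, ∑ h : ∀ i, A i, q g' * q h * β h)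
            = (∑ g' : ∀ i, A i, q g') * (∑ h : ∀ i, A i, β h * q h) := by
        intro β
        rw [Finset.sum_mul_sum]
        exact Finset.sum_congr rfl fun g' _ => Finset.sum_congr rfl fun h _ => by ring
      have step : ∑ g' : ∀ i, A i, ∑ h : ∀ i, A i,
            (1/4) * (c J * q g' * q h) *
              (chi (I ∩ J) x g' * chi (I \ J) x h + chi (I \ J) x g' * chi (I ∩ J) x h
                - chi I x g' - chi I x h)
          = (1/4) * c J * (∑ g' : ∀ i, A i, ∑ h : ∀ i, A i,
              (q g' * q h * (chi (I ∩ J) x g' * chi (I \ J) x h)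
               + q g' * q h * (chi (I \ J) x g' * chi (I ∩ J) x h)
               - q g' * q h * chi I x g'
               - q g' * q h * chi I x h)) := by
        rw [Finset.mul_sum]
        refine Finset.sum_congr rfl fun g' _ => ?_
        rw [Finset.mul_sum]
        exact Finset.sum_congr rfl fun h _ => by ring
      rw [step]
      simp only [Finset.sum_add_distrib, Finset.sum_sub_distrib]
      rw [prod_eval, prod_eval, peval1, peval2]
      simp only [margI]
      all_goals ring
    _ = (1 / 2) * ∑ J : Finset L,
          c J * (margI q (I ∩ J) x * margI q (I \ J) x
            - margI q I x * ∑ h : ∀ i, A i, q h) := by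
      conv_rhs => rw [Finset.mul_sum]
      exact Finset.sum_congr rfl fun J _ => by ring

/-- Derivative of a generalized marginal along the flow. -/
lemma hasDerivAt_margI (c : Finset L → ℝ) (p : ℝ → (∀ i, A i) → ℝ) {t : ℝ}
    (hode : HasDerivAt p (recF c (p t)) t) (I : Finset L) (x : ∀ i, A i) :
    HasDerivAt (fun s => margI (p s) I x)
      ((1 / 2) * ∑ J : Finset L, c J * (margI (p t) (I ∩ J) x * margI (p t) (I \ J) x
          - margI (p t) I x * ∑ h : ∀ i, A i, p t h)) t := by
  have h1 : ∀ g, HasDerivAt (fun s => p s g) (recF c (p t) g) t := hasDerivAt_pi.mp hode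
  have h2 : HasDerivAt (fun s => margI (p s) I x)
      (∑ g : ∀ i, A i, chi I x g * recF c (p t) g) t := by
    simp only [margI]
    exact HasDerivAt.fun_sum fun g _ => (h1 g).const_mul (chi I x g)
  rwa [sum_chi_recF] at h2

end aux

/-- A Grönwall-type positivity lemma. -/
lemma pos_of_gronwall (f d : ℝ → ℝ) (K t : ℝ) (ht : 0 < t) (hf0 : 0 ≤ f 0)
    (hdf : ∀ s ∈ Set.Icc (0:ℝ) t, HasDerivAt f (d s) s)
    (hpos : ∀ s ∈ Set.Ioo (0:ℝ) t, 0 < K * f s + d s) : 0 < f t := by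
  set F : ℝ → ℝ := fun s => Real.exp (K * s) * f s with hF
  have hFd : ∀ s ∈ Set.Icc (0:ℝ) t,
      HasDerivAt F (Real.exp (K * s) * (K * f s + d s)) s := by
    intro s hs
    have he : HasDerivAt (fun u : ℝ => Real.exp (K * u)) (K * Real.exp (K * s)) s := by
      have h0 : HasDerivAt (fun u : ℝ => K * u) K s := by
        simpa using (hasDerivAt_id s).const_mul K
      simpa [mul_comm] using h0.exp
    have := he.mul (hdf s hs)
    exact this.congr_deriv (by ring)
  have hcont : ContinuousOn F (Set.Icc 0 t) := fun s hs =>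
    ((hFd s hs).continuousAt).continuousWithinAt
  have hmono : StrictMonoOn F (Set.Icc 0 t) := by
    apply strictMonoOn_of_deriv_pos (convex_Icc 0 t) hcont
    intro s hs
    rw [interior_Icc] at hs
    rw [(hFd s (Set.Ioo_subset_Icc_self hs)).deriv]
    exact mul_pos (Real.exp_pos _) (hpos s hs)
  have hlt : F 0 < F t :=
    hmono (Set.left_mem_Icc.mpr ht.le) (Set.right_mem_Icc.mpr ht.le) ht
  have hF0 : 0 ≤ F 0 := by simpa [hF] using hf0
  have hFt : 0 < Real.exp (K * t) * f t := lt_of_le_of_lt hF0 hlt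
  nlinarith [Real.exp_pos (K * t)]

/-- Constancy from vanishing derivative on `[0, ∞)`. -/
lemma const_of_deriv_zero_nonneg (f : ℝ → ℝ)
    (hf : ∀ s : ℝ, 0 ≤ s → HasDerivAt f 0 s) : ∀ t : ℝ, 0 ≤ t → f t = f 0 := by
  intro t ht
  rcases eq_or_lt_of_le ht with h | h
  · rw [← h]
  · have hcont : ContinuousOn f (Set.Icc 0 t) := fun s hs =>
      (hf s hs.1).continuousAt.continuousWithinAt
    exact constant_of_has_deriv_right_zero hcont
      (fun s hs => (hf s hs.1).hasDerivWithinAt) t (Set.right_mem_Icc.mpr ht)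

/-- **Recombination immediately produces all gametes.**
Under the standing assumption, if the initial condition of a differentiable nonnegative
solution of the recombination dynamics lies in the simplex `S_𝓖` and has all marginals
positive (all alleles are present in the population), then all gamete frequencies are
strictly positive for all `t > 0`. -/
theorem positivity_for_positive_times
    {L : Type} [Fintype L] [DecidableEq L] [Nonempty L]
    (A : L → Type) [∀ i, Fintype (A i)] [∀ i, DecidableEq (A i)]
    (hA : ∀ i, 2 ≤ Fintype.card (A i))
    (c : Finset L → ℝ) (hc : ∀ I, 0 ≤ c I) (hcsym : ∀ I, c I = c Iᶜ)
    (hsep : ∀ i j : L, i ≠ j →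
      0 < ∑ I ∈ univ.filter (fun I : Finset L => i ∈ I ∧ j ∉ I), c I)
    (p : ℝ → (∀ i, A i) → ℝ)
    (hnn : ∀ t, 0 ≤ t → ∀ g, 0 ≤ p t g)
    (hode : ∀ t, 0 ≤ t → HasDerivAt p (recF c (p t)) t)
    (hp1 : ∑ g : ∀ i, A i, p 0 g = 1)
    (hm : ∀ (i : L) (a : A i), 0 < marg (p 0) i a) :
    ∀ t, 0 < t → ∀ g, 0 < p t g := by
  classical
  haveI hAne : ∀ i, Nonempty (A i) := fun i =>
    Fintype.card_pos_iff.mp (lt_of_lt_of_le (by norm_num) (hA i))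
  set x₀ : ∀ i, A i := Classical.arbitrary _ with hx₀
  -- total mass is conserved
  have hS : ∀ t : ℝ, 0 ≤ t → (∑ g : ∀ i, A i, p t g) = 1 := by
    intro t ht
    have hconst : ∀ s : ℝ, 0 ≤ s →
        HasDerivAt (fun u => margI (p u) (∅ : Finset L) x₀) 0 s := by
      intro s hs
      have hd := hasDerivAt_margI c p (hode s hs) (∅ : Finset L) x₀
      have hzero : (1 / 2) * ∑ J : Finset L,
          c J * (margI (p s) (∅ ∩ J) x₀ * margI (p s) (∅ \ J) x₀
            - margI (p s) (∅ : Finset L) x₀ * ∑ h : ∀ i, A i, p s h) = 0 := by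
        simp [Finset.empty_inter, Finset.empty_sdiff, margI_empty]
      rwa [hzero] at hd
    have := const_of_deriv_zero_nonneg _ hconst t ht
    rw [margI_empty, margI_empty] at this
    rw [this, hp1]
  -- singleton marginals are conserved
  have hsingle : ∀ (t : ℝ), 0 ≤ t → ∀ (i : L) (x : ∀ i, A i),
      0 < margI (p t) ({i} : Finset L) x := by
    intro t ht i x
    have hconst : ∀ s : ℝ, 0 ≤ s →
        HasDerivAt (fun u => margI (p u) ({i} : Finset L) x) 0 s := by
      intro s hs
      have hd := hasDerivAt_margI c p (hode s hs) ({i} : Finset L) x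
      have hzero : (1 / 2) * ∑ J : Finset L,
          c J * (margI (p s) ({i} ∩ J) x * margI (p s) ({i} \ J) x
            - margI (p s) ({i} : Finset L) x * ∑ h : ∀ i, A i, p s h) = 0 := by
        refine mul_eq_zero_of_right _ (Finset.sum_eq_zero fun J _ => ?_)
        by_cases hij : i ∈ J
        · rw [Finset.singleton_inter_of_mem hij,
            Finset.sdiff_eq_empty_iff_subset.mpr (Finset.singleton_subset_iff.mpr hij),
            margI_empty]
          ring
        · rw [Finset.singleton_inter_of_notMem hij,
            Finset.sdiff_eq_self_iff_disjoint.mpr (Finset.disjoint_singleton_left.mpr hij),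
            margI_empty]
          ring
      rwa [hzero] at hd
    have := const_of_deriv_zero_nonneg _ hconst t ht
    rw [this, margI_singleton]
    exact hm i (x i)
  -- main induction on the set of loci
  have key : ∀ I : Finset L, I.Nonempty → ∀ (x : ∀ i, A i) (t : ℝ), 0 < t →
      0 < margI (p t) I x := by
    intro I
    induction I using Finset.strongInduction with
    | _ I ih =>
      intro hne x t ht
      by_cases hcard : I.card = 1
      · obtain ⟨i, rfl⟩ := Finset.card_eq_one.mp hcard
        exact hsingle t ht.le i x
      · have h2 : 2 ≤ I.card := by
          have := Finset.card_pos.mpr hne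
          omega
        obtain ⟨i, hi, j, hj, hij⟩ := Finset.one_lt_card.mp (show 1 < I.card by omega)
        obtain ⟨J₀, hJ₀mem, hJ₀pos⟩ :
            ∃ J₀ ∈ univ.filter (fun J : Finset L => i ∈ J ∧ j ∉ J), 0 < c J₀ := by
          by_contra hcon
          push_neg at hcon
          have hle : ∑ J ∈ univ.filter (fun J : Finset L => i ∈ J ∧ j ∉ J), c J ≤ 0 :=
            Finset.sum_nonpos fun J hJ => hcon J hJ
          exact absurd (hsep i j hij) (by linarith)
        obtain ⟨hiJ₀, hjJ₀⟩ := (Finset.mem_filter.mp hJ₀mem).2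
        have hIJsub : I ∩ J₀ ⊂ I :=
          (Finset.ssubset_iff_of_subset Finset.inter_subset_left).mpr
            ⟨j, hj, fun hc => hjJ₀ (Finset.mem_inter.mp hc).2⟩
        have hIdsub : I \ J₀ ⊂ I :=
          (Finset.ssubset_iff_of_subset Finset.sdiff_subset).mpr
            ⟨i, hi, fun hc => (Finset.mem_sdiff.mp hc).2 hiJ₀⟩
        have hIJne : (I ∩ J₀).Nonempty := ⟨i, Finset.mem_inter.mpr ⟨hi, hiJ₀⟩⟩
        have hIdne : (I \ J₀).Nonempty := ⟨j, Finset.mem_sdiff.mpr ⟨hj, hjJ₀⟩⟩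
        set K : ℝ := (1 / 2) * ∑ J : Finset L, c J with hK
        refine pos_of_gronwall (fun s => margI (p s) I x)
          (fun s => (1 / 2) * ∑ J : Finset L,
            c J * (margI (p s) (I ∩ J) x * margI (p s) (I \ J) x
              - margI (p s) I x * ∑ h : ∀ i, A i, p s h)) K t ht
          (margI_nonneg (hnn 0 le_rfl) I x)
          (fun s hs => hasDerivAt_margI c p (hode s hs.1) I x) ?_
        intro s hs
        have hs0 : (0:ℝ) ≤ s := le_of_lt hs.1
        have hSs : (∑ h : ∀ i, A i, p s h) = 1 := hS s hs0
        have hterm : ∀ J : Finset L,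
            0 ≤ c J * (margI (p s) (I ∩ J) x * margI (p s) (I \ J) x) := fun J =>
          mul_nonneg (hc J) (mul_nonneg (margI_nonneg (hnn s hs0) _ _)
            (margI_nonneg (hnn s hs0) _ _))
        have hJ0term : 0 < c J₀ * (margI (p s) (I ∩ J₀) x * margI (p s) (I \ J₀) x) :=
          mul_pos hJ₀pos (mul_pos (ih _ hIJsub hIJne x s hs.1) (ih _ hIdsub hIdne x s hs.1))
        have hsum : 0 < ∑ J : Finset L,
            c J * (margI (p s) (I ∩ J) x * margI (p s) (I \ J) x) :=
          lt_of_lt_of_le hJ0term (Finset.single_le_sum (fun J _ => hterm J) (Finset.mem_univ J₀))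
        have expand : K * margI (p s) I x + (1 / 2) * ∑ J : Finset L,
            c J * (margI (p s) (I ∩ J) x * margI (p s) (I \ J) x
              - margI (p s) I x * ∑ h : ∀ i, A i, p s h)
            = (1 / 2) * ∑ J : Finset L,
                c J * (margI (p s) (I ∩ J) x * margI (p s) (I \ J) x) := by
          rw [hK, hSs]
          have split : ∑ J : Finset L,
              c J * (margI (p s) (I ∩ J) x * margI (p s) (I \ J) x
                - margI (p s) I x * 1)
              = (∑ J : Finset L, c J * (margI (p s) (I ∩ J) x * margI (p s) (I \ J) x))
                - (∑ J : Finset L, c J) * margI (p s) I x := by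
            rw [Finset.sum_mul]
            rw [← Finset.sum_sub_distrib]
            exact Finset.sum_congr rfl fun J _ => by ring
          rw [split]
          ring
        rw [expand]
        linarith
  intro t ht g
  have := key univ Finset.univ_nonempty g t ht
  rwa [margI_univ] at this
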